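/- arXiv:0810.3629 — 2 statements merged into one kernel-verified Lean document; each statement's English description precedes it below -/
import Mathlib

section
/- There exists a unique ℂ-linear functional s̄ on ℂ[SL₂]_q such that s̄(1) = 1 and, for every f ∈ ℂ[SL₂]_q: s̄(t₂₂ f) = 0, s̄(f t₁₁) = 0, s̄(t₁₂ f) = s̄(f t₁₂) = q·s̄(f), and s̄(t₂₁ f) = s̄(f t₂₁) = −s̄(f). In particular s̄(t₁₁) = 0, s̄(t₁₂) = q, s̄(t₂₁) = −1, s̄(t₂₂) = 0, so s̄ is a quantum analog of the Weyl group element (0 1; −1 0) of SL₂. -/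
noncomputable section

namespace QuantumSL2

/-- The free algebra on the four generators `t₁₁, t₁₂, t₂₁, t₂₂` (indexed by `Fin 4`). -/
abbrev F4 := FreeAlgebra ℂ (Fin 4)

/-- The free generator corresponding to `t₁₁`. -/
def a : F4 := FreeAlgebra.ι ℂ 0
/-- The free generator corresponding to `t₁₂`. -/
def b : F4 := FreeAlgebra.ι ℂ 1
/-- The free generator corresponding to `t₂₁`. -/
def c : F4 := FreeAlgebra.ι ℂ 2
/-- The free generator corresponding to `t₂₂`. -/
def d : F4 := FreeAlgebra.ι ℂ 3

/-- The defining relations of the quantum group algebra `ℂ[SL₂]_q`. -/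
inductive SLRel (q : ℝ) : F4 → F4 → Prop
  | r1 : SLRel q (a * b) ((q : ℂ) • (b * a))
  | r2 : SLRel q (a * c) ((q : ℂ) • (c * a))
  | r3 : SLRel q (b * d) ((q : ℂ) • (d * b))
  | r4 : SLRel q (c * d) ((q : ℂ) • (d * c))
  | r5 : SLRel q (b * c) (c * b)
  | r6 : SLRel q (a * d - d * a) (((q : ℂ) - (q : ℂ)⁻¹) • (b * c))
  | r7 : SLRel q (a * d - (q : ℂ) • (b * c)) 1

/-- The quantum group algebra `ℂ[SL₂]_q`. -/
abbrev SL2q (q : ℝ) := RingQuot (SLRel q)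

/-- The generator `t₁₁` of `ℂ[SL₂]_q`. -/
def t11 (q : ℝ) : SL2q q := RingQuot.mkAlgHom ℂ (SLRel q) a
/-- The generator `t₁₂` of `ℂ[SL₂]_q`. -/
def t12 (q : ℝ) : SL2q q := RingQuot.mkAlgHom ℂ (SLRel q) b
/-- The generator `t₂₁` of `ℂ[SL₂]_q`. -/
def t21 (q : ℝ) : SL2q q := RingQuot.mkAlgHom ℂ (SLRel q) c
/-- The generator `t₂₂` of `ℂ[SL₂]_q`. -/
def t22 (q : ℝ) : SL2q q := RingQuot.mkAlgHom ℂ (SLRel q) d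

end QuantumSL2

open QuantumSL2
noncomputable section

namespace QW
open QuantumSL2

abbrev V := ℕ →₀ ℂ

variable (q : ℝ)

def opA : V →ₗ[ℂ] V := Finsupp.lsum ℂ fun n => (1 - (q:ℂ)^(2*n)) • Finsupp.lsingle (n-1)
def opB : V →ₗ[ℂ] V := Finsupp.lsum ℂ fun n => ((q:ℂ)^(n+1)) • Finsupp.lsingle n
def opC : V →ₗ[ℂ] V := Finsupp.lsum ℂ fun n => (-(q:ℂ)^n) • Finsupp.lsingle n
def opD : V →ₗ[ℂ] V := Finsupp.lsum ℂ fun n => Finsupp.lsingle (n+1)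

@[simp] lemma opA_single (n : ℕ) (x : ℂ) :
    opA q (Finsupp.single n x) = Finsupp.single (n-1) ((1 - (q:ℂ)^(2*n)) * x) := by
  simp [opA, Finsupp.smul_single']
@[simp] lemma opB_single (n : ℕ) (x : ℂ) :
    opB q (Finsupp.single n x) = Finsupp.single n ((q:ℂ)^(n+1) * x) := by
  simp [opB, Finsupp.smul_single']
@[simp] lemma opC_single (n : ℕ) (x : ℂ) :
    opC q (Finsupp.single n x) = Finsupp.single n (-(q:ℂ)^n * x) := by
  simp [opC, Finsupp.smul_single']
@[simp] lemma opD_single (n : ℕ) (x : ℂ) :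
    opD (Finsupp.single n x) = Finsupp.single (n+1) x := by simp [opD]

def ops : Fin 4 → Module.End ℂ V := ![opA q, opB q, opC q, opD]

def pi0 : F4 →ₐ[ℂ] Module.End ℂ V := FreeAlgebra.lift ℂ (ops q)

variable {q}

lemma hqc (hq0 : 0 < q) : (q:ℂ) ≠ 0 := by exact_mod_cast ne_of_gt hq0

lemma pi0_rel (hq0 : 0 < q) : ∀ ⦃x y⦄, SLRel q x y → pi0 q x = pi0 q y := by
  intro x y h
  have hq' : (q:ℂ) ≠ 0 := hqc hq0
  induction h with
  | r1 =>
      simp only [pi0, a, b, map_mul, map_smul, FreeAlgebra.lift_ι_apply]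
      apply Finsupp.lhom_ext
      intro n x
      cases n with
      | zero => simp [ops, -Finsupp.single_mul]
      | succ m =>
          simp only [ops, Module.End.mul_apply, LinearMap.smul_apply, Matrix.cons_val_zero,
            Matrix.cons_val_one, Matrix.head_cons, opA_single, opB_single,
            Nat.add_sub_cancel, Finsupp.smul_single']
          congr 1
          ring
  | r2 =>
      simp only [pi0, a, c, map_mul, map_smul, FreeAlgebra.lift_ι_apply]
      apply Finsupp.lhom_ext
      intro n x
      cases n with
      | zero => simp [ops, -Finsupp.single_mul]
      | succ m =>
          simp only [ops, Module.End.mul_apply, LinearMap.smul_apply, Matrix.cons_val_zero,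
            Matrix.cons_val_one, Matrix.head_cons, Matrix.cons_val_two, Matrix.tail_cons,
            opA_single, opC_single, Nat.add_sub_cancel, Finsupp.smul_single']
          congr 1
          ring
  | r3 =>
      simp only [pi0, b, d, map_mul, map_smul, FreeAlgebra.lift_ι_apply]
      apply Finsupp.lhom_ext
      intro n x
      simp only [ops, Module.End.mul_apply, LinearMap.smul_apply, Matrix.cons_val_one,
        Matrix.head_cons, Matrix.cons_val_zero, Matrix.cons_val_three, Matrix.tail_cons, opB_single, opD_single,
        Finsupp.smul_single']
      congr 1
      ring
  | r4 =>
      simp only [pi0, c, d, map_mul, map_smul, FreeAlgebra.lift_ι_apply]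
      apply Finsupp.lhom_ext
      intro n x
      simp only [ops, Module.End.mul_apply, LinearMap.smul_apply, Matrix.cons_val_two,
        Matrix.tail_cons, Matrix.head_cons, Matrix.cons_val_three, opC_single, opD_single,
        Finsupp.smul_single']
      congr 1
      ring
  | r5 =>
      simp only [pi0, b, c, map_mul, FreeAlgebra.lift_ι_apply]
      apply Finsupp.lhom_ext
      intro n x
      simp only [ops, Module.End.mul_apply, Matrix.cons_val_one, Matrix.head_cons,
        Matrix.cons_val_zero, Matrix.cons_val_two, Matrix.tail_cons, opB_single, opC_single]
      congr 1
      ring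
  | r6 =>
      simp only [pi0, a, b, c, d, map_mul, map_sub, map_smul, FreeAlgebra.lift_ι_apply]
      apply Finsupp.lhom_ext
      intro n x
      simp only [ops, LinearMap.sub_apply, Module.End.mul_apply, LinearMap.smul_apply,
        Matrix.cons_val_zero, Matrix.cons_val_one, Matrix.head_cons, Matrix.cons_val_two,
        Matrix.tail_cons, Matrix.cons_val_three, opA_single, opB_single, opC_single,
        opD_single, Finsupp.smul_single', Nat.add_sub_cancel]
      cases n with
      | zero =>
          have h0 : (1 - (q:ℂ)^(2*0)) = 0 := by norm_num
          rw [h0, zero_mul, Finsupp.single_zero, sub_zero]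
          congr 1
          field_simp
          ring
      | succ m =>
          rw [Nat.succ_sub_one, ← Finsupp.single_sub]
          congr 1
          field_simp
          ring
  | r7 =>
      simp only [pi0, a, b, c, d, map_mul, map_sub, map_smul, map_one, FreeAlgebra.lift_ι_apply]
      apply Finsupp.lhom_ext
      intro n x
      simp only [ops, LinearMap.sub_apply, Module.End.mul_apply, LinearMap.smul_apply,
        Module.End.one_apply, Matrix.cons_val_zero, Matrix.cons_val_one, Matrix.head_cons,
        Matrix.cons_val_two, Matrix.tail_cons, Matrix.cons_val_three, opA_single, opB_single,
        opC_single, opD_single, Finsupp.smul_single', Nat.add_sub_cancel]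
      rw [← Finsupp.single_sub]
      congr 1
      ring

end QW

section Rels
open QuantumSL2
variable {q : ℝ} (hq0 : 0 < q)

local notation "A" => t11 q
local notation "B" => t12 q
local notation "C" => t21 q
local notation "D" => t22 q
local notation "Q" => ((q : ℂ))

lemma relAB : A * B = Q • (B * A) := by
  have h := RingQuot.mkAlgHom_rel ℂ (SLRel.r1 (q := q))
  simpa only [map_mul, map_smul, t11, t12] using h

lemma relAC : A * C = Q • (C * A) := by
  have h := RingQuot.mkAlgHom_rel ℂ (SLRel.r2 (q := q))
  simpa only [map_mul, map_smul, t11, t21] using h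

lemma relBD : B * D = Q • (D * B) := by
  have h := RingQuot.mkAlgHom_rel ℂ (SLRel.r3 (q := q))
  simpa only [map_mul, map_smul, t12, t22] using h

lemma relCD : C * D = Q • (D * C) := by
  have h := RingQuot.mkAlgHom_rel ℂ (SLRel.r4 (q := q))
  simpa only [map_mul, map_smul, t21, t22] using h

lemma relBC : B * C = C * B := by
  have h := RingQuot.mkAlgHom_rel ℂ (SLRel.r5 (q := q))
  simpa only [map_mul, t12, t21] using h

lemma hqC (hq0 : 0 < q) : (q:ℂ) ≠ 0 := by exact_mod_cast ne_of_gt hq0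

lemma relAD : A * D = 1 + Q • (B * C) := by
  have h := RingQuot.mkAlgHom_rel ℂ (SLRel.r7 (q := q))
  simp only [map_sub, map_mul, map_smul, map_one] at h
  rw [t11, t22, t12, t21]
  exact sub_eq_iff_eq_add.mp h

lemma relDA (hq0 : 0 < q) : D * A = 1 + Q⁻¹ • (B * C) := by
  have hq' : (q:ℂ) ≠ 0 := hqC hq0
  have h6 := RingQuot.mkAlgHom_rel ℂ (SLRel.r6 (q := q))
  simp only [map_sub, map_mul, map_smul] at h6
  rw [← t11, ← t22, ← t12, ← t21] at h6
  have hDA : D * A = A * D - (Q - Q⁻¹) • (B * C) := by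
    rw [← h6]; abel
  rw [relAD] at hDA
  rw [hDA]
  module

-- generic commutation power lemmas
lemma comm_pow {x y : SL2q q} {γ : ℂ} (h : x * y = γ • (y * x)) (j : ℕ) :
    x * y ^ j = γ ^ j • (y ^ j * x) := by
  induction j with
  | zero => simp
  | succ n ih =>
      rw [pow_succ', ← mul_assoc, h, smul_mul_assoc, mul_assoc, ih, mul_smul_comm, smul_smul,
        ← mul_assoc, ← pow_succ', ← pow_succ']

lemma comm_pow' {x y : SL2q q} {γ : ℂ} (h : x * y = γ • (y * x)) (i : ℕ) :
    x ^ i * y = γ ^ i • (y * x ^ i) := by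
  induction i with
  | zero => simp
  | succ n ih =>
      rw [pow_succ, mul_assoc, h, mul_smul_comm, ← mul_assoc, ih, smul_mul_assoc, smul_smul,
        mul_assoc, ← pow_succ, ← pow_succ']

lemma relBA (hq0 : 0 < q) : B * A = Q⁻¹ • (A * B) := by
  rw [relAB, smul_smul, inv_mul_cancel₀ (hqC hq0), one_smul]
lemma relCA (hq0 : 0 < q) : C * A = Q⁻¹ • (A * C) := by
  rw [relAC, smul_smul, inv_mul_cancel₀ (hqC hq0), one_smul]
lemma relDB (hq0 : 0 < q) : D * B = Q⁻¹ • (B * D) := by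
  rw [relBD, smul_smul, inv_mul_cancel₀ (hqC hq0), one_smul]
lemma relDC (hq0 : 0 < q) : D * C = Q⁻¹ • (C * D) := by
  rw [relCD, smul_smul, inv_mul_cancel₀ (hqC hq0), one_smul]
lemma relCB : C * B = B * C := (relBC).symm

end Rels

namespace QW
open QuantumSL2

variable {q : ℝ}

def piq (hq0 : 0 < q) : SL2q q →ₐ[ℂ] Module.End ℂ V :=
  RingQuot.liftAlgHom ℂ ⟨pi0 q, pi0_rel hq0⟩

lemma piq_t11 (hq0 : 0 < q) : piq hq0 (t11 q) = opA q := by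
  rw [t11, piq, RingQuot.liftAlgHom_mkAlgHom_apply]
  simp [pi0, QuantumSL2.a, ops]
lemma piq_t12 (hq0 : 0 < q) : piq hq0 (t12 q) = opB q := by
  rw [t12, piq, RingQuot.liftAlgHom_mkAlgHom_apply]
  simp [pi0, QuantumSL2.b, ops]
lemma piq_t21 (hq0 : 0 < q) : piq hq0 (t21 q) = opC q := by
  rw [t21, piq, RingQuot.liftAlgHom_mkAlgHom_apply]
  simp [pi0, QuantumSL2.c, ops]
lemma piq_t22 (hq0 : 0 < q) : piq hq0 (t22 q) = opD := by
  rw [t22, piq, RingQuot.liftAlgHom_mkAlgHom_apply]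
  simp [pi0, QuantumSL2.d, ops]

def e0 : V := Finsupp.single 0 1

def sbar (hq0 : 0 < q) : SL2q q →ₗ[ℂ] ℂ :=
  (Finsupp.lapply 0).comp ((LinearMap.applyₗ e0).comp (piq hq0).toLinearMap)

lemma sbar_apply (hq0 : 0 < q) (f : SL2q q) : sbar hq0 f = (piq hq0 f e0) 0 := rfl

lemma opD_coeff0 (w : V) : opD w 0 = 0 := by
  have h : (Finsupp.lapply 0 : V →ₗ[ℂ] ℂ).comp opD = 0 := by
    apply Finsupp.lhom_ext
    intro n x
    simp [-Finsupp.single_mul]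
  exact DFunLike.congr_fun h w

lemma opB_coeff0 (w : V) : opB q w 0 = (q:ℂ) * w 0 := by
  have h : (Finsupp.lapply 0 : V →ₗ[ℂ] ℂ).comp (opB q)
      = (q:ℂ) • (Finsupp.lapply 0 : V →ₗ[ℂ] ℂ) := by
    apply Finsupp.lhom_ext
    intro n x
    cases n with
    | zero => simp [-Finsupp.single_mul]
    | succ m => simp [-Finsupp.single_mul, Finsupp.single_apply]
  exact DFunLike.congr_fun h w

lemma opC_coeff0 (w : V) : opC q w 0 = -(w 0) := by
  have h : (Finsupp.lapply 0 : V →ₗ[ℂ] ℂ).comp (opC q)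
      = -(Finsupp.lapply 0 : V →ₗ[ℂ] ℂ) := by
    apply Finsupp.lhom_ext
    intro n x
    cases n with
    | zero => simp [-Finsupp.single_mul]
    | succ m => simp [-Finsupp.single_mul, Finsupp.single_apply]
  exact DFunLike.congr_fun h w

lemma opA_e0 : opA q e0 = 0 := by simp [e0, -Finsupp.single_mul]
lemma opB_e0 : opB q e0 = (q:ℂ) • e0 := by
  simp [e0, -Finsupp.single_mul, Finsupp.smul_single]
lemma opC_e0 : opC q e0 = -e0 := by
  simp [e0, -Finsupp.single_mul, Finsupp.smul_single]

lemma sbar_one (hq0 : 0 < q) : sbar hq0 1 = 1 := by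
  rw [sbar_apply, map_one]
  simp [e0]

lemma sbar_t22_mul (hq0 : 0 < q) (f : SL2q q) : sbar hq0 (t22 q * f) = 0 := by
  rw [sbar_apply, map_mul, piq_t22]
  exact opD_coeff0 _

lemma sbar_mul_t11 (hq0 : 0 < q) (f : SL2q q) : sbar hq0 (f * t11 q) = 0 := by
  rw [sbar_apply, map_mul]
  simp only [Module.End.mul_apply]
  rw [piq_t11, opA_e0, map_zero (piq hq0 f)]
  simp

lemma sbar_t12_mul (hq0 : 0 < q) (f : SL2q q) : sbar hq0 (t12 q * f) = (q:ℂ) * sbar hq0 f := by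
  rw [sbar_apply, map_mul, sbar_apply]
  simp only [Module.End.mul_apply]
  rw [piq_t12, opB_coeff0]

lemma sbar_mul_t12 (hq0 : 0 < q) (f : SL2q q) : sbar hq0 (f * t12 q) = (q:ℂ) * sbar hq0 f := by
  rw [sbar_apply, map_mul, sbar_apply]
  simp only [Module.End.mul_apply]
  rw [piq_t12, opB_e0, map_smul]
  simp

lemma sbar_t21_mul (hq0 : 0 < q) (f : SL2q q) : sbar hq0 (t21 q * f) = -sbar hq0 f := by
  rw [sbar_apply, map_mul, sbar_apply]
  simp only [Module.End.mul_apply]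
  rw [piq_t21, opC_coeff0]

lemma sbar_mul_t21 (hq0 : 0 < q) (f : SL2q q) : sbar hq0 (f * t21 q) = -sbar hq0 f := by
  rw [sbar_apply, map_mul, sbar_apply]
  simp only [Module.End.mul_apply]
  rw [piq_t21, opC_e0, map_neg]
  simp

end QW

section Span
open QuantumSL2

variable {q : ℝ}

local notation "A" => t11 q
local notation "B" => t12 q
local notation "C" => t21 q
local notation "D" => t22 q
local notation "Q" => ((q : ℂ))

lemma swap_pow {x y : SL2q q} {γ : ℂ} (h : x * y = γ • (y * x)) (j : ℕ) (z : SL2q q) :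
    x * (y ^ j * z) = γ ^ j • (y ^ j * (x * z)) := by
  rw [← mul_assoc, comm_pow h j, smul_mul_assoc, mul_assoc]

lemma swap_pow' {x y : SL2q q} {γ : ℂ} (h : x * y = γ • (y * x)) (i : ℕ) (z : SL2q q) :
    x ^ i * (y * z) = γ ^ i • (y * (x ^ i * z)) := by
  rw [← mul_assoc, comm_pow' h i, smul_mul_assoc, mul_assoc]

lemma relCB1 : C * B = (1:ℂ) • (B * C) := by rw [relCB, one_smul]

def Ngen (q : ℝ) : Set (SL2q q) :=
  {x | (∃ i j k : ℕ, x = (t11 q)^i * ((t12 q)^j * (t21 q)^k)) ∨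
       (∃ j k l : ℕ, x = (t12 q)^j * ((t21 q)^k * (t22 q)^l))}

def NN (q : ℝ) : Submodule ℂ (SL2q q) := Submodule.span ℂ (Ngen q)

lemma mem1 (i j k : ℕ) : A^i * (B^j * C^k) ∈ NN q :=
  Submodule.subset_span (Or.inl ⟨i, j, k, rfl⟩)

lemma mem2 (j k l : ℕ) : B^j * (C^k * D^l) ∈ NN q :=
  Submodule.subset_span (Or.inr ⟨j, k, l, rfl⟩)

lemma closA (hq0 : 0 < q) : ∀ x ∈ Ngen q, A * x ∈ NN q := by
  rintro x (⟨i, j, k, rfl⟩ | ⟨j, k, l, rfl⟩)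
  · have h : A * (A^i * (B^j * C^k)) = A^(i+1) * (B^j * C^k) := by
      rw [← mul_assoc, ← pow_succ']
    rw [h]; exact mem1 _ _ _
  · cases l with
    | zero =>
        have h : A * (B^j * (C^k * D^0)) = A^1 * (B^j * C^k) := by
          rw [pow_zero, mul_one, pow_one]
        rw [h]; exact mem1 _ _ _
    | succ l =>
        have h : A * (B^j * (C^k * D^(l+1)))
            = (Q^j * Q^k) • (B^j * (C^k * D^l)
              + Q • (B^(j+1) * (C^(k+1) * D^l))) := by
          rw [swap_pow relAB, swap_pow relAC]
          rw [pow_succ' (t22 q), ← mul_assoc A, relAD, add_mul, one_mul, smul_mul_assoc,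
            mul_assoc (t12 q), mul_add, mul_smul_comm, mul_add, mul_smul_comm]
          rw [swap_pow' relCB1 k (t21 q * D^l), one_pow, one_smul, ← mul_assoc ((t21 q)^k),
            ← pow_succ]
          rw [mul_smul_comm, ← mul_assoc ((t12 q)^j) (t12 q), ← pow_succ, smul_smul]
        rw [h]
        exact (NN q).smul_mem _ (add_mem (mem2 _ _ _) ((NN q).smul_mem _ (mem2 _ _ _)))

lemma closB (hq0 : 0 < q) : ∀ x ∈ Ngen q, B * x ∈ NN q := by
  rintro x (⟨i, j, k, rfl⟩ | ⟨j, k, l, rfl⟩)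
  · have h : B * (A^i * (B^j * C^k)) = (Q⁻¹)^i • (A^i * (B^(j+1) * C^k)) := by
      rw [swap_pow (relBA hq0), ← mul_assoc (t12 q), ← pow_succ']
    rw [h]
    exact (NN q).smul_mem _ (mem1 _ _ _)
  · have h : B * (B^j * (C^k * D^l)) = B^(j+1) * (C^k * D^l) := by
      rw [← mul_assoc, ← pow_succ']
    rw [h]; exact mem2 _ _ _

lemma closC (hq0 : 0 < q) : ∀ x ∈ Ngen q, C * x ∈ NN q := by
  rintro x (⟨i, j, k, rfl⟩ | ⟨j, k, l, rfl⟩)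
  · have h : C * (A^i * (B^j * C^k)) = (Q⁻¹)^i • (A^i * (B^j * C^(k+1))) := by
      rw [swap_pow (relCA hq0), swap_pow relCB1, one_pow, one_smul, ← pow_succ']
    rw [h]
    exact (NN q).smul_mem _ (mem1 _ _ _)
  · have h : C * (B^j * (C^k * D^l)) = B^j * (C^(k+1) * D^l) := by
      rw [swap_pow relCB1, one_pow, one_smul, ← mul_assoc (t21 q), ← pow_succ']
    rw [h]; exact mem2 _ _ _

lemma closD (hq0 : 0 < q) : ∀ x ∈ Ngen q, D * x ∈ NN q := by
  rintro x (⟨i, j, k, rfl⟩ | ⟨j, k, l, rfl⟩)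
  · cases i with
    | zero =>
        have h : D * (A^0 * (B^j * C^k))
            = ((Q⁻¹)^j * (Q⁻¹)^k) • (B^j * (C^k * D^1)) := by
          rw [pow_zero, one_mul, swap_pow (relDB hq0), comm_pow (relDC hq0), mul_smul_comm,
            smul_smul, pow_one]
        rw [h]
        exact (NN q).smul_mem _ (mem2 _ _ _)
    | succ i =>
        have h : D * (A^(i+1) * (B^j * C^k))
            = A^i * (B^j * C^k)
              + (Q⁻¹ * ((Q⁻¹)^i * (Q⁻¹)^i))
                • (A^i * (B^(j+1) * C^(k+1))) := by
          rw [pow_succ' (t11 q), mul_assoc, ← mul_assoc D, relDA hq0, add_mul, one_mul,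
            smul_mul_assoc, mul_assoc (t12 q)]
          rw [swap_pow (relCA hq0) i (B^j * C^k), swap_pow relCB1 j (C^k), one_pow, one_smul,
            ← pow_succ']
          rw [mul_smul_comm, swap_pow (relBA hq0) i (B^j * C^(k+1)),
            ← mul_assoc (t12 q), ← pow_succ']
          rw [smul_smul, smul_smul]
          module
        rw [h]
        exact add_mem (mem1 _ _ _) ((NN q).smul_mem _ (mem1 _ _ _))
  · have h : D * (B^j * (C^k * D^l)) = ((Q⁻¹)^j * (Q⁻¹)^k) • (B^j * (C^k * D^(l+1))) := by
      rw [swap_pow (relDB hq0), swap_pow (relDC hq0), ← pow_succ', mul_smul_comm, smul_smul]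
    rw [h]
    exact (NN q).smul_mem _ (mem2 _ _ _)

lemma mk_mul_mem (hq0 : 0 < q) :
    ∀ (x : F4) (v : SL2q q), v ∈ NN q → RingQuot.mkAlgHom ℂ (SLRel q) x * v ∈ NN q := by
  have gen_step : ∀ g : SL2q q, (∀ x ∈ Ngen q, g * x ∈ NN q) →
      ∀ v ∈ NN q, g * v ∈ NN q := by
    intro g hg v hv
    induction hv using Submodule.span_induction with
    | mem x hx => exact hg x hx
    | zero => rw [mul_zero]; exact (NN q).zero_mem
    | add x y _ _ hx hy => rw [mul_add]; exact add_mem hx hy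
    | smul c x _ hx => rw [mul_smul_comm]; exact (NN q).smul_mem _ hx
  intro x
  induction x using FreeAlgebra.induction with
  | grade0 r =>
      intro v hv
      rw [AlgHom.commutes, Algebra.algebraMap_eq_smul_one, smul_mul_assoc, one_mul]
      exact (NN q).smul_mem _ hv
  | grade1 i =>
      fin_cases i
      · exact gen_step _ (closA hq0)
      · exact gen_step _ (closB hq0)
      · exact gen_step _ (closC hq0)
      · exact gen_step _ (closD hq0)
  | mul x y hx hy =>
      intro v hv
      rw [map_mul, mul_assoc]
      exact hx _ (hy _ hv)
  | add x y hx hy =>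
      intro v hv
      rw [map_add, add_mul]
      exact add_mem (hx _ hv) (hy _ hv)

lemma one_mem_NN : (1 : SL2q q) ∈ NN q := by
  have h : (1 : SL2q q) = A^0 * (B^0 * C^0) := by simp
  rw [h]; exact mem1 0 0 0

lemma NN_top (hq0 : 0 < q) : ∀ z : SL2q q, z ∈ NN q := by
  intro z
  obtain ⟨x, rfl⟩ := RingQuot.mkAlgHom_surjective ℂ (SLRel q) z
  have h := mk_mul_mem hq0 x 1 one_mem_NN
  simpa using h

end Span

section Unique
open QuantumSL2

variable {q : ℝ}

local notation "A" => t11 q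
local notation "B" => t12 q
local notation "C" => t21 q
local notation "D" => t22 q

variable (s : SL2q q →ₗ[ℂ] ℂ)

lemma s_mul_cpow (h : ∀ f, s (f * C) = -s f) (f : SL2q q) (k : ℕ) :
    s (f * C^k) = (-1)^k * s f := by
  induction k with
  | zero => simp
  | succ n ih => rw [pow_succ, ← mul_assoc, h, ih]; ring

lemma s_mul_bpow (h : ∀ f, s (f * B) = (q:ℂ) * s f) (f : SL2q q) (j : ℕ) :
    s (f * B^j) = (q:ℂ)^j * s f := by
  induction j with
  | zero => simp
  | succ n ih => rw [pow_succ, ← mul_assoc, h, ih]; ring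

lemma s_cpow_mul (h : ∀ f, s (C * f) = -s f) (f : SL2q q) (k : ℕ) :
    s (C^k * f) = (-1)^k * s f := by
  induction k with
  | zero => simp
  | succ n ih => rw [pow_succ', mul_assoc, h, ih]; ring

lemma s_bpow_mul (h : ∀ f, s (B * f) = (q:ℂ) * s f) (f : SL2q q) (j : ℕ) :
    s (B^j * f) = (q:ℂ)^j * s f := by
  induction j with
  | zero => simp
  | succ n ih => rw [pow_succ', mul_assoc, h, ih]; ring

lemma s_apow (h1 : s 1 = 1) (h : ∀ f, s (f * A) = 0) (i : ℕ) :
    s (A^i) = if i = 0 then 1 else 0 := by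
  cases i with
  | zero => simpa using h1
  | succ n => rw [pow_succ, h]; simp

lemma s_dpow (h1 : s 1 = 1) (h : ∀ f, s (D * f) = 0) (l : ℕ) :
    s (D^l) = if l = 0 then 1 else 0 := by
  cases l with
  | zero => simpa using h1
  | succ n => rw [pow_succ', h]; simp

lemma s_val1 (h1 : s 1 = 1) (h11 : ∀ f, s (f * A) = 0) (h12 : ∀ f, s (f * B) = (q:ℂ) * s f)
    (h21 : ∀ f, s (f * C) = -s f) (i j k : ℕ) :
    s (A^i * (B^j * C^k)) = (-1)^k * ((q:ℂ)^j * (if i = 0 then 1 else 0)) := by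
  rw [← mul_assoc, s_mul_cpow s h21, s_mul_bpow s h12, s_apow s h1 h11]

lemma s_val2 (h1 : s 1 = 1) (h22 : ∀ f, s (D * f) = 0) (h12 : ∀ f, s (B * f) = (q:ℂ) * s f)
    (h21 : ∀ f, s (C * f) = -s f) (j k l : ℕ) :
    s (B^j * (C^k * D^l)) = (q:ℂ)^j * ((-1)^k * (if l = 0 then 1 else 0)) := by
  rw [s_bpow_mul s h12, s_cpow_mul s h21, s_dpow s h1 h22]

lemma functional_unique (hq0 : 0 < q) (s s' : SL2q q →ₗ[ℂ] ℂ)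
    (h1 : s 1 = 1) (h22 : ∀ f, s (D * f) = 0) (h11 : ∀ f, s (f * A) = 0)
    (h12l : ∀ f, s (B * f) = (q:ℂ) * s f) (h12r : ∀ f, s (f * B) = (q:ℂ) * s f)
    (h21l : ∀ f, s (C * f) = -s f) (h21r : ∀ f, s (f * C) = -s f)
    (h1' : s' 1 = 1) (h22' : ∀ f, s' (D * f) = 0) (h11' : ∀ f, s' (f * A) = 0)
    (h12l' : ∀ f, s' (B * f) = (q:ℂ) * s' f) (h12r' : ∀ f, s' (f * B) = (q:ℂ) * s' f)
    (h21l' : ∀ f, s' (C * f) = -s' f) (h21r' : ∀ f, s' (f * C) = -s' f) :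
    s = s' := by
  ext f
  have hf := NN_top hq0 f
  induction hf using Submodule.span_induction with
  | mem x hx =>
      rcases hx with ⟨i, j, k, rfl⟩ | ⟨j, k, l, rfl⟩
      · rw [s_val1 s h1 h11 h12r h21r, s_val1 s' h1' h11' h12r' h21r']
      · rw [s_val2 s h1 h22 h12l h21l, s_val2 s' h1' h22' h12l' h21l']
  | zero => simp
  | add x y _ _ hx hy => simp [map_add, hx, hy]
  | smul c x _ hx => simp [map_smul, hx]

end Unique

/-- There is a unique `ℂ`-linear functional `s̄` on `ℂ[SL₂]_q` with `s̄(1) = 1`,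
`s̄(t₂₂ f) = 0`, `s̄(f t₁₁) = 0`, `s̄(t₁₂ f) = s̄(f t₁₂) = q s̄(f)`,
`s̄(t₂₁ f) = s̄(f t₂₁) = −s̄(f)`; in particular `s̄(t₁₁) = 0`, `s̄(t₁₂) = q`,
`s̄(t₂₁) = −1`, `s̄(t₂₂) = 0`. -/
theorem sl2q_weyl_functional (q : ℝ) (hq0 : 0 < q) (hq1 : q < 1) :
    (∃! s : SL2q q →ₗ[ℂ] ℂ,
      s 1 = 1 ∧
      (∀ f : SL2q q, s (t22 q * f) = 0) ∧
      (∀ f : SL2q q, s (f * t11 q) = 0) ∧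
      (∀ f : SL2q q, s (t12 q * f) = (q : ℂ) * s f) ∧
      (∀ f : SL2q q, s (f * t12 q) = (q : ℂ) * s f) ∧
      (∀ f : SL2q q, s (t21 q * f) = -s f) ∧
      (∀ f : SL2q q, s (f * t21 q) = -s f)) ∧
    (∀ s : SL2q q →ₗ[ℂ] ℂ,
      s 1 = 1 →
      (∀ f : SL2q q, s (t22 q * f) = 0) →
      (∀ f : SL2q q, s (f * t11 q) = 0) →
      (∀ f : SL2q q, s (t12 q * f) = (q : ℂ) * s f) →
      (∀ f : SL2q q, s (f * t12 q) = (q : ℂ) * s f) →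
      (∀ f : SL2q q, s (t21 q * f) = -s f) →
      (∀ f : SL2q q, s (f * t21 q) = -s f) →
      s (t11 q) = 0 ∧ s (t12 q) = (q : ℂ) ∧ s (t21 q) = -1 ∧ s (t22 q) = 0) := by
  constructor
  · refine ⟨QW.sbar hq0, ⟨QW.sbar_one hq0, QW.sbar_t22_mul hq0, QW.sbar_mul_t11 hq0,
      QW.sbar_t12_mul hq0, QW.sbar_mul_t12 hq0, QW.sbar_t21_mul hq0, QW.sbar_mul_t21 hq0⟩, ?_⟩
    rintro s ⟨h1, h22, h11, h12l, h12r, h21l, h21r⟩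
    exact functional_unique hq0 s (QW.sbar hq0) h1 h22 h11 h12l h12r h21l h21r
      (QW.sbar_one hq0) (QW.sbar_t22_mul hq0) (QW.sbar_mul_t11 hq0) (QW.sbar_t12_mul hq0)
      (QW.sbar_mul_t12 hq0) (QW.sbar_t21_mul hq0) (QW.sbar_mul_t21 hq0)
  · intro s h1 h22 h11 h12l h12r h21l h21r
    refine ⟨?_, ?_, ?_, ?_⟩
    · have := h11 1; rwa [one_mul] at this
    · have := h12l 1; rwa [mul_one, h1, mul_one] at this
    · have := h21l 1; rwa [mul_one, h1] at this
    · have := h22 1; rwa [mul_one] at this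
end
end
end

section
/- The quantum disc algebra Pol(ℂ)_q carries a U_q(sl₂)-module algebra structure: there exist a ℂ-algebra automorphism K of Pol(ℂ)_q and ℂ-linear maps E, F on Pol(ℂ)_q such that (i) K z = q² z and K w = q^{−2} w; (ii) E(fg) = E(f)g + K(f)E(g) and F(fg) = F(f)K^{−1}(g) + f F(g) for all f, g ∈ Pol(ℂ)_q; (iii) E z = −q^{1/2} z², E w = q^{−3/2}·1, F z = q^{1/2}·1, F w = −q^{5/2} w²; and (iv) as linear operators, K E K^{−1} = q² E, K F K^{−1} = q^{−2} F, and E F − F E = (K − K^{−1})/(q − q^{−1}). -/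
noncomputable section

/-- The defining relation of the quantum disc algebra: `w z = q² z w + (1 − q²)·1`,
where `true` encodes the generator `z` and `false` the generator `w`. -/
inductive DiscRel (q : ℝ) : FreeAlgebra ℂ Bool → FreeAlgebra ℂ Bool → Prop
  | rel : DiscRel q (FreeAlgebra.ι ℂ false * FreeAlgebra.ι ℂ true)
      (((q : ℂ) ^ 2) • (FreeAlgebra.ι ℂ true * FreeAlgebra.ι ℂ false) +
        ((1 : ℂ) - (q : ℂ) ^ 2) • (1 : FreeAlgebra ℂ Bool))

/-- The quantum disc algebra `Pol(ℂ)_q`. -/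
abbrev PolDisc (q : ℝ) := RingQuot (DiscRel q)

/-- The generator `z` of the quantum disc algebra. -/
def zGen (q : ℝ) : PolDisc q := RingQuot.mkAlgHom ℂ (DiscRel q) (FreeAlgebra.ι ℂ true)

/-- The generator `w = z*` of the quantum disc algebra. -/
def wGen (q : ℝ) : PolDisc q := RingQuot.mkAlgHom ℂ (DiscRel q) (FreeAlgebra.ι ℂ false)

set_option linter.unnecessarySeqFocus false

namespace QD

variable (q : ℝ)

lemma rel_pd : wGen q * zGen q =
    ((q : ℂ) ^ 2) • (zGen q * wGen q) + ((1 : ℂ) - (q : ℂ) ^ 2) • 1 := by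
  have h := RingQuot.mkAlgHom_rel ℂ (DiscRel.rel (q := q))
  simpa [zGen, wGen, map_mul, map_add, map_smul, map_one] using h

/-- Induction principle for `PolDisc`. -/
lemma pd_induction {P : PolDisc q → Prop}
    (halg : ∀ c : ℂ, P (algebraMap ℂ (PolDisc q) c))
    (hz : P (zGen q)) (hw : P (wGen q))
    (hadd : ∀ f g, P f → P g → P (f + g))
    (hmul : ∀ f g, P f → P g → P (f * g)) : ∀ f, P f := by
  intro f
  obtain ⟨x, rfl⟩ := RingQuot.mkAlgHom_surjective ℂ (DiscRel q) f
  induction x using FreeAlgebra.induction with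
  | grade0 c => simpa using halg c
  | grade1 b =>   cases b
                  · exact hw
                  · exact hz
  | add x y hx hy => rw [map_add]; exact hadd _ _ hx hy
  | mul x y hx hy => rw [map_mul]; exact hmul _ _ hx hy

lemma hqc (hq0 : 0 < q) : ((q : ℂ)) ≠ 0 := by
  exact_mod_cast ne_of_gt hq0

lemma ha0 (hq0 : 0 < q) : ((q : ℂ) ^ 2) ≠ 0 := pow_ne_zero _ (hqc q hq0)

/-- The free algebra hom underlying `K`. -/
def Kfree : FreeAlgebra ℂ Bool →ₐ[ℂ] PolDisc q :=
  FreeAlgebra.lift ℂ (fun b =>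
    cond b (((q : ℂ) ^ 2) • zGen q) ((((q : ℂ) ^ 2)⁻¹) • wGen q))

def Kinvfree : FreeAlgebra ℂ Bool →ₐ[ℂ] PolDisc q :=
  FreeAlgebra.lift ℂ (fun b =>
    cond b ((((q : ℂ) ^ 2)⁻¹) • zGen q) (((q : ℂ) ^ 2) • wGen q))

lemma Kfree_rel (hq0 : 0 < q) : ∀ ⦃x y⦄, DiscRel q x y → Kfree q x = Kfree q y := by
  rintro _ _ ⟨⟩
  simp only [Kfree, map_mul, map_add, map_smul, map_one, FreeAlgebra.lift_ι_apply,
    Bool.cond_true, Bool.cond_false, smul_mul_assoc, mul_smul_comm, smul_smul]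
  rw [inv_mul_cancel₀ (ha0 q hq0), mul_inv_cancel₀ (ha0 q hq0)]
  simp only [one_smul, mul_one]
  exact rel_pd q

lemma Kinvfree_rel (hq0 : 0 < q) : ∀ ⦃x y⦄, DiscRel q x y → Kinvfree q x = Kinvfree q y := by
  rintro _ _ ⟨⟩
  simp only [Kinvfree, map_mul, map_add, map_smul, map_one, FreeAlgebra.lift_ι_apply,
    Bool.cond_true, Bool.cond_false, smul_mul_assoc, mul_smul_comm, smul_smul]
  rw [inv_mul_cancel₀ (ha0 q hq0), mul_inv_cancel₀ (ha0 q hq0)]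
  simp only [one_smul, mul_one]
  exact rel_pd q

def KHom (hq0 : 0 < q) : PolDisc q →ₐ[ℂ] PolDisc q :=
  RingQuot.liftAlgHom ℂ ⟨Kfree q, Kfree_rel q hq0⟩

def KinvHom (hq0 : 0 < q) : PolDisc q →ₐ[ℂ] PolDisc q :=
  RingQuot.liftAlgHom ℂ ⟨Kinvfree q, Kinvfree_rel q hq0⟩

variable (hq0 : 0 < q)

lemma KHom_z : KHom q hq0 (zGen q) = ((q : ℂ) ^ 2) • zGen q := by
  simp [KHom, zGen, RingQuot.liftAlgHom_mkAlgHom_apply, Kfree]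

lemma KHom_w : KHom q hq0 (wGen q) = (((q : ℂ) ^ 2)⁻¹) • wGen q := by
  simp [KHom, wGen, RingQuot.liftAlgHom_mkAlgHom_apply, Kfree]

lemma KinvHom_z : KinvHom q hq0 (zGen q) = (((q : ℂ) ^ 2)⁻¹) • zGen q := by
  simp [KinvHom, zGen, RingQuot.liftAlgHom_mkAlgHom_apply, Kinvfree]

lemma KinvHom_w : KinvHom q hq0 (wGen q) = ((q : ℂ) ^ 2) • wGen q := by
  simp [KinvHom, wGen, RingQuot.liftAlgHom_mkAlgHom_apply, Kinvfree]

lemma K_Kinv : (KHom q hq0).comp (KinvHom q hq0) = AlgHom.id ℂ (PolDisc q) := by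
  apply RingQuot.ringQuot_ext'
  apply FreeAlgebra.hom_ext
  funext b
  cases b <;>
    simp [KHom, KinvHom, Kfree, Kinvfree, RingQuot.liftAlgHom_mkAlgHom_apply,
      zGen, wGen, smul_smul, inv_mul_cancel₀ (ha0 q hq0), mul_inv_cancel₀ (ha0 q hq0)]

lemma Kinv_K : (KinvHom q hq0).comp (KHom q hq0) = AlgHom.id ℂ (PolDisc q) := by
  apply RingQuot.ringQuot_ext'
  apply FreeAlgebra.hom_ext
  funext b
  cases b <;>
    simp [KHom, KinvHom, Kfree, Kinvfree, RingQuot.liftAlgHom_mkAlgHom_apply,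
      zGen, wGen, smul_smul, inv_mul_cancel₀ (ha0 q hq0), mul_inv_cancel₀ (ha0 q hq0)]

def Keq : PolDisc q ≃ₐ[ℂ] PolDisc q :=
  AlgEquiv.ofAlgHom (KHom q hq0) (KinvHom q hq0) (K_Kinv q hq0) (Kinv_K q hq0)

lemma Keq_apply (f : PolDisc q) : Keq q hq0 f = KHom q hq0 f := rfl
lemma Keq_symm_apply (f : PolDisc q) : (Keq q hq0).symm f = KinvHom q hq0 f := rfl

end QD

namespace QD2
open QD

variable (q : ℝ)

local notation "a" => ((q : ℂ) ^ 2)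
local notation "s" => ((Real.sqrt q : ℝ) : ℂ)
local notation "z" => zGen q
local notation "w" => wGen q

lemma hs2 (hq0 : 0 < q) : s ^ 2 = (q : ℂ) := by
  norm_cast
  exact Real.sq_sqrt hq0.le

lemma hs0 (hq0 : 0 < q) : s ≠ 0 := by
  simp only [ne_eq, Complex.ofReal_eq_zero]
  exact ne_of_gt (Real.sqrt_pos.mpr hq0)

lemma wz_z : w * (z * z) = a • (z * (w * z)) + ((1:ℂ) - a) • z := by
  calc w * (z * z) = (w * z) * z := by rw [mul_assoc]
    _ = (a • (z * w) + ((1:ℂ) - a) • 1) * z := by rw [rel_pd]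
    _ = a • (z * (w * z)) + ((1:ℂ) - a) • z := by
        simp [add_mul, smul_mul_assoc, mul_assoc]

lemma wz_w : w * (z * w) = a • (z * (w * w)) + ((1:ℂ) - a) • w := by
  calc w * (z * w) = (w * z) * w := by rw [mul_assoc]
    _ = (a • (z * w) + ((1:ℂ) - a) • 1) * w := by rw [rel_pd]
    _ = a • (z * (w * w)) + ((1:ℂ) - a) • w := by
        simp [add_mul, smul_mul_assoc, mul_assoc]

/-- Free-algebra hom whose `(0,1)` entry will be `E`. -/
def Efree : FreeAlgebra ℂ Bool →ₐ[ℂ] Matrix (Fin 2) (Fin 2) (PolDisc q) :=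
  FreeAlgebra.lift ℂ (fun b =>
    cond b !![a • z, (-s) • (z * z); 0, z]
           !![a⁻¹ • w, ((s ^ 3)⁻¹ : ℂ) • (1 : PolDisc q); 0, w])

/-- Free-algebra hom whose `(0,1)` entry will be `F`. -/
def Ffree : FreeAlgebra ℂ Bool →ₐ[ℂ] Matrix (Fin 2) (Fin 2) (PolDisc q) :=
  FreeAlgebra.lift ℂ (fun b =>
    cond b !![z, s • (1 : PolDisc q); 0, a⁻¹ • z]
           !![w, (-(s ^ 5)) • (w * w); 0, a • w])

lemma Efree_rel (hq0 : 0 < q) : ∀ ⦃x y⦄, DiscRel q x y → Efree q x = Efree q y := by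
  rintro _ _ ⟨⟩
  simp only [Efree, map_mul, map_add, map_smul, map_one, FreeAlgebra.lift_ι_apply,
    Bool.cond_true, Bool.cond_false]
  ext i j
  fin_cases i <;> fin_cases j <;>
    simp [Matrix.mul_apply, Fin.sum_univ_two, Matrix.one_apply, smul_mul_assoc,
      mul_smul_comm, smul_smul, rel_pd, wz_z, wz_w, smul_add, mul_add, add_mul,
      mul_assoc] <;>
  match_scalars <;>
  (simp only [← hs2 q hq0]; try field_simp [hs0 q hq0]; try ring)

lemma Ffree_rel (hq0 : 0 < q) : ∀ ⦃x y⦄, DiscRel q x y → Ffree q x = Ffree q y := by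
  rintro _ _ ⟨⟩
  simp only [Ffree, map_mul, map_add, map_smul, map_one, FreeAlgebra.lift_ι_apply,
    Bool.cond_true, Bool.cond_false]
  ext i j
  fin_cases i <;> fin_cases j <;>
    simp [Matrix.mul_apply, Fin.sum_univ_two, Matrix.one_apply, smul_mul_assoc,
      mul_smul_comm, smul_smul, rel_pd, wz_z, wz_w, smul_add, mul_add, add_mul,
      mul_assoc] <;>
  match_scalars <;>
  (simp only [← hs2 q hq0]; try field_simp [hs0 q hq0]; try ring)

end QD2

namespace QD3
open QD QD2

variable (q : ℝ) (hq0 : 0 < q)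

local notation "a" => ((q : ℂ) ^ 2)
local notation "s" => ((Real.sqrt q : ℝ) : ℂ)
local notation "z" => zGen q
local notation "w" => wGen q

def EPsi : PolDisc q →ₐ[ℂ] Matrix (Fin 2) (Fin 2) (PolDisc q) :=
  RingQuot.liftAlgHom ℂ ⟨Efree q, Efree_rel q hq0⟩

def FPsi : PolDisc q →ₐ[ℂ] Matrix (Fin 2) (Fin 2) (PolDisc q) :=
  RingQuot.liftAlgHom ℂ ⟨Ffree q, Ffree_rel q hq0⟩

lemma EPsi_z : EPsi q hq0 z = !![a • z, (-s) • (z * z); 0, z] := by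
  simp [EPsi, zGen, RingQuot.liftAlgHom_mkAlgHom_apply, Efree]

lemma EPsi_w : EPsi q hq0 w = !![a⁻¹ • w, ((s ^ 3)⁻¹ : ℂ) • (1 : PolDisc q); 0, w] := by
  simp [EPsi, wGen, RingQuot.liftAlgHom_mkAlgHom_apply, Efree]

lemma FPsi_z : FPsi q hq0 z = !![z, s • (1 : PolDisc q); 0, a⁻¹ • z] := by
  simp [FPsi, zGen, RingQuot.liftAlgHom_mkAlgHom_apply, Ffree]

lemma FPsi_w : FPsi q hq0 w = !![w, (-(s ^ 5)) • (w * w); 0, a • w] := by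
  simp [FPsi, wGen, RingQuot.liftAlgHom_mkAlgHom_apply, Ffree]

lemma EPsi_diag : ∀ f : PolDisc q,
    EPsi q hq0 f 1 0 = 0 ∧ EPsi q hq0 f 0 0 = KHom q hq0 f ∧ EPsi q hq0 f 1 1 = f := by
  apply pd_induction q (P := fun f =>
    EPsi q hq0 f 1 0 = 0 ∧ EPsi q hq0 f 0 0 = KHom q hq0 f ∧ EPsi q hq0 f 1 1 = f)
  · intro c
    refine ⟨?_, ?_, ?_⟩ <;>
      simp [Matrix.algebraMap_matrix_apply, Algebra.algebraMap_eq_smul_one]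
  · exact ⟨by simp [EPsi_z], by simp [EPsi_z, KHom_z], by simp [EPsi_z]⟩
  · exact ⟨by simp [EPsi_w], by simp [EPsi_w, KHom_w], by simp [EPsi_w]⟩
  · rintro f g ⟨h1, h2, h3⟩ ⟨h4, h5, h6⟩
    refine ⟨?_, ?_, ?_⟩ <;> simp [map_add, h1, h2, h3, h4, h5, h6]
  · rintro f g ⟨h1, h2, h3⟩ ⟨h4, h5, h6⟩
    refine ⟨?_, ?_, ?_⟩ <;>
      simp [map_mul, Matrix.mul_apply, Fin.sum_univ_two, h1, h2, h3, h4, h5, h6]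

lemma FPsi_diag : ∀ f : PolDisc q,
    FPsi q hq0 f 1 0 = 0 ∧ FPsi q hq0 f 0 0 = f ∧ FPsi q hq0 f 1 1 = KinvHom q hq0 f := by
  apply pd_induction q (P := fun f =>
    FPsi q hq0 f 1 0 = 0 ∧ FPsi q hq0 f 0 0 = f ∧ FPsi q hq0 f 1 1 = KinvHom q hq0 f)
  · intro c
    refine ⟨?_, ?_, ?_⟩ <;>
      simp [Matrix.algebraMap_matrix_apply, Algebra.algebraMap_eq_smul_one]
  · exact ⟨by simp [FPsi_z], by simp [FPsi_z], by simp [FPsi_z, KinvHom_z]⟩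
  · exact ⟨by simp [FPsi_w], by simp [FPsi_w], by simp [FPsi_w, KinvHom_w]⟩
  · rintro f g ⟨h1, h2, h3⟩ ⟨h4, h5, h6⟩
    refine ⟨?_, ?_, ?_⟩ <;> simp [map_add, h1, h2, h3, h4, h5, h6]
  · rintro f g ⟨h1, h2, h3⟩ ⟨h4, h5, h6⟩
    refine ⟨?_, ?_, ?_⟩ <;>
      simp [map_mul, Matrix.mul_apply, Fin.sum_univ_two, h1, h2, h3, h4, h5, h6]

def Emap : PolDisc q →ₗ[ℂ] PolDisc q where
  toFun f := EPsi q hq0 f 0 1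
  map_add' f g := by simp
  map_smul' c f := by simp

def Fmap : PolDisc q →ₗ[ℂ] PolDisc q where
  toFun f := FPsi q hq0 f 0 1
  map_add' f g := by simp
  map_smul' c f := by simp

lemma Emap_apply (f : PolDisc q) : Emap q hq0 f = EPsi q hq0 f 0 1 := rfl
lemma Fmap_apply (f : PolDisc q) : Fmap q hq0 f = FPsi q hq0 f 0 1 := rfl

lemma E_leibniz (f g : PolDisc q) :
    Emap q hq0 (f * g) = Emap q hq0 f * g + KHom q hq0 f * Emap q hq0 g := by
  have hf := EPsi_diag q hq0 f
  have hg := EPsi_diag q hq0 g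
  simp [Emap_apply, map_mul, Matrix.mul_apply, Fin.sum_univ_two, hf.2.1, hg.2.2, add_comm]

lemma F_leibniz (f g : PolDisc q) :
    Fmap q hq0 (f * g) = Fmap q hq0 f * KinvHom q hq0 g + f * Fmap q hq0 g := by
  have hf := FPsi_diag q hq0 f
  have hg := FPsi_diag q hq0 g
  simp [Fmap_apply, map_mul, Matrix.mul_apply, Fin.sum_univ_two, hf.2.1, hg.2.2, add_comm]

lemma E_z : Emap q hq0 z = (-s) • (z * z) := by simp [Emap_apply, EPsi_z]
lemma E_w : Emap q hq0 w = ((s ^ 3)⁻¹ : ℂ) • (1 : PolDisc q) := by simp [Emap_apply, EPsi_w]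
lemma F_z : Fmap q hq0 z = s • (1 : PolDisc q) := by simp [Fmap_apply, FPsi_z]
lemma F_w : Fmap q hq0 w = (-(s ^ 5)) • (w * w) := by simp [Fmap_apply, FPsi_w]

lemma E_one : Emap q hq0 1 = 0 := by
  have h := E_leibniz q hq0 1 1
  simpa using h

lemma F_one : Fmap q hq0 1 = 0 := by
  have h := F_leibniz q hq0 1 1
  simpa using h

lemma E_algebraMap (c : ℂ) : Emap q hq0 (algebraMap ℂ (PolDisc q) c) = 0 := by
  rw [Algebra.algebraMap_eq_smul_one, map_smul, E_one, smul_zero]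

lemma F_algebraMap (c : ℂ) : Fmap q hq0 (algebraMap ℂ (PolDisc q) c) = 0 := by
  rw [Algebra.algebraMap_eq_smul_one, map_smul, F_one, smul_zero]

end QD3

namespace QD4
open QD QD2 QD3

variable (q : ℝ) (hq0 : 0 < q) (hq1 : q < 1)

local notation "a" => ((q : ℂ) ^ 2)
local notation "s" => ((Real.sqrt q : ℝ) : ℂ)
local notation "z" => zGen q
local notation "w" => wGen q
local notation "K" => KHom q hq0
local notation "Ki" => KinvHom q hq0
local notation "E" => Emap q hq0
local notation "F" => Fmap q hq0

lemma Kinv_K_apply (f : PolDisc q) : Ki (K f) = f := AlgHom.congr_fun (Kinv_K q hq0) f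
lemma K_Kinv_apply (f : PolDisc q) : K (Ki f) = f := AlgHom.congr_fun (K_Kinv q hq0) f

lemma KE : ∀ f : PolDisc q, K (E f) = a • E (K f) := by
  apply pd_induction q (P := fun f => K (E f) = a • E (K f))
  · intro c
    simp [E_algebraMap, AlgHom.commutes]
  · simp only [E_z, KHom_z, map_smul, map_mul, smul_smul, mul_smul_comm, smul_mul_assoc]
    match_scalars; ring
  · simp only [E_w, KHom_w, map_smul, map_one, smul_smul]
    match_scalars
    field_simp [hqc q hq0, hs0 q hq0]
  · intro f g hf hg
    simp [map_add, hf, hg]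
  · intro f g hf hg
    rw [E_leibniz, map_add, map_mul, map_mul, hf, hg, map_mul, E_leibniz]
    simp only [smul_add, smul_mul_assoc, mul_smul_comm]

lemma KF : ∀ f : PolDisc q, K (F f) = a⁻¹ • F (K f) := by
  apply pd_induction q (P := fun f => K (F f) = a⁻¹ • F (K f))
  · intro c
    simp [F_algebraMap, AlgHom.commutes]
  · simp only [F_z, KHom_z, map_smul, map_one, smul_smul]
    match_scalars
    field_simp [hqc q hq0]
  · simp only [F_w, KHom_w, map_smul, map_mul, smul_smul, mul_smul_comm, smul_mul_assoc]
    match_scalars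
    field_simp [hqc q hq0]
    try ring
  · intro f g hf hg
    simp [map_add, hf, hg]
  · intro f g hf hg
    rw [F_leibniz, map_add, map_mul, map_mul, hf, hg, map_mul, F_leibniz]
    have h1 : K (Ki g) = g := K_Kinv_apply q hq0 g
    have h2 : Ki (K g) = g := Kinv_K_apply q hq0 g
    simp only [h1, h2, smul_add, smul_mul_assoc, mul_smul_comm]

end QD4

namespace QD5
open QD QD2 QD3 QD4

variable (q : ℝ) (hq0 : 0 < q) (hq1 : q < 1)

local notation "a" => ((q : ℂ) ^ 2)
local notation "s" => ((Real.sqrt q : ℝ) : ℂ)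
local notation "z" => zGen q
local notation "w" => wGen q
local notation "K" => KHom q hq0
local notation "Ki" => KinvHom q hq0
local notation "E" => Emap q hq0
local notation "F" => Fmap q hq0
local notation "c" => (((q : ℂ) - (q : ℂ)⁻¹)⁻¹)

lemma hd (hq0 : 0 < q) (hq1 : q < 1) : (q : ℂ) - (q : ℂ)⁻¹ ≠ 0 := by
  have h2 : q - q⁻¹ < 0 := by
    have h4 : 0 < q⁻¹ := inv_pos.mpr hq0
    nlinarith [mul_inv_cancel₀ (ne_of_gt hq0)]
  have h5 : ((q - q⁻¹ : ℝ) : ℂ) ≠ 0 := by exact_mod_cast ne_of_lt h2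
  simpa using h5

lemma hds (hq0 : 0 < q) (hq1 : q < 1) : s ^ 2 - (s ^ 2)⁻¹ ≠ 0 := by
  rw [hs2 q hq0]; exact hd q hq0 hq1

lemma hq2ne1 (hq0 : 0 < q) (hq1 : q < 1) : ((q : ℂ)) ^ 2 ≠ 1 := by
  have h : (q : ℝ) ^ 2 < 1 := by nlinarith
  intro hcon
  have : ((q : ℝ) ^ 2 : ℝ) = 1 := by exact_mod_cast hcon
  linarith

lemma hds4 (hq0 : 0 < q) (hq1 : q < 1) : -(s ^ 4) + s ^ 8 ≠ 0 := by
  have h4 : s ^ 4 = (q : ℂ) ^ 2 := by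
    rw [show (s:ℂ) ^ 4 = (s ^ 2) ^ 2 by ring, hs2 q hq0]
  have h8 : s ^ 8 = (q : ℂ) ^ 4 := by
    rw [show (s:ℂ) ^ 8 = (s ^ 2) ^ 4 by ring, hs2 q hq0]
  rw [h4, h8]
  intro hcon
  have h1 : ((q : ℂ)) ^ 2 * (((q : ℂ)) ^ 2 - 1) = 0 := by linear_combination hcon
  rcases mul_eq_zero.mp h1 with h | h
  · exact ha0 q hq0 h
  · exact hq2ne1 q hq0 hq1 (by linear_combination h)

lemma hds1 (hq0 : 0 < q) (hq1 : q < 1) : -1 + s ^ 4 ≠ 0 := by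
  have h4 : s ^ 4 = (q : ℂ) ^ 2 := by
    rw [show (s:ℂ) ^ 4 = (s ^ 2) ^ 2 by ring, hs2 q hq0]
  rw [h4]
  intro hcon
  exact hq2ne1 q hq0 hq1 (by linear_combination hcon)

lemma EKinv (g : PolDisc q) : E (Ki g) = a • Ki (E g) := by
  have h := KE q hq0 (Ki g)
  rw [K_Kinv_apply] at h
  have h2 := congrArg Ki h
  rwa [Kinv_K_apply, map_smul] at h2

include hq1 in
lemma comm : ∀ f : PolDisc q, E (F f) - F (E f) = c • (K f - Ki f) := by
  apply pd_induction q (P := fun f => E (F f) - F (E f) = c • (K f - Ki f))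
  · intro cc
    simp [E_algebraMap, F_algebraMap, AlgHom.commutes]
  · simp only [F_z, E_z, map_smul, E_one, smul_zero, F_leibniz, KinvHom_z, KHom_z,
      F_one, map_neg, neg_smul, smul_neg, smul_add, smul_smul, smul_mul_assoc,
      mul_smul_comm, mul_one, one_mul, sub_zero, zero_sub, neg_neg, sub_neg_eq_add]
    match_scalars <;>
    · simp only [← hs2 q hq0]
      field_simp [hs0 q hq0, hds q hq0 hq1, hds4 q hq0 hq1]
      try ring
      try linear_combination (-(s ^ 2 + s ^ 6)) * mul_inv_cancel₀ (hds4 q hq0 hq1)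
      try linear_combination ((s ^ 8 + s ^ 12)) * mul_inv_cancel₀ (hds4 q hq0 hq1)
      try linear_combination (-(1 + s ^ 4)) * mul_inv_cancel₀ (hds1 q hq0 hq1)
      try linear_combination (1 + s ^ 4) * mul_inv_cancel₀ (hds1 q hq0 hq1)
  · simp only [F_w, E_w, map_smul, F_one, smul_zero, E_leibniz, KinvHom_w, KHom_w,
      E_one, map_neg, neg_smul, smul_neg, smul_add, smul_smul, smul_mul_assoc,
      mul_smul_comm, mul_one, one_mul, sub_zero, zero_sub, neg_neg, sub_neg_eq_add]
    match_scalars <;>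
    · simp only [← hs2 q hq0]
      field_simp [hs0 q hq0, hds q hq0 hq1, hds4 q hq0 hq1]
      try ring
      try linear_combination (-(s ^ 2 + s ^ 6)) * mul_inv_cancel₀ (hds4 q hq0 hq1)
      try linear_combination ((s ^ 8 + s ^ 12)) * mul_inv_cancel₀ (hds4 q hq0 hq1)
      try linear_combination (-(1 + s ^ 4)) * mul_inv_cancel₀ (hds1 q hq0 hq1)
      try linear_combination (1 + s ^ 4) * mul_inv_cancel₀ (hds1 q hq0 hq1)
  · intro f g hf hg
    simp only [map_add, smul_add, smul_sub]
    rw [show ∀ A B C D : PolDisc q, (A + B) - (C + D) = (A - C) + (B - D) from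
      fun A B C D => by abel]
    rw [hf, hg]
    simp only [smul_sub]
    abel
  · intro f g hf hg
    have hf' : E (F f) = c • (K f - Ki f) + F (E f) := sub_eq_iff_eq_add.mp hf
    have hg' : E (F g) = c • (K g - Ki g) + F (E g) := sub_eq_iff_eq_add.mp hg
    simp only [F_leibniz, E_leibniz, map_add, map_mul, EKinv q hq0, KF q hq0,
      hf', hg', smul_add, smul_sub, smul_mul_assoc, mul_smul_comm, smul_smul,
      add_mul, mul_add, sub_mul, mul_sub]
    match_scalars <;> field_simp [hqc q hq0] <;> ring

end QD5


/-- The quantum disc algebra `Pol(ℂ)_q` is a `U_q(sl₂)`-module algebra: there are an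
algebra automorphism `K` and linear maps `E`, `F` acting by twisted derivations and
satisfying the `U_q(sl₂)` commutation relations, with the prescribed action on the
generators `z`, `w` (here `q^{1/2} = Real.sqrt q`). -/
theorem polDisc_uqsl2_module_algebra (q : ℝ) (hq0 : 0 < q) (hq1 : q < 1) :
    ∃ (K : PolDisc q ≃ₐ[ℂ] PolDisc q) (E F : PolDisc q →ₗ[ℂ] PolDisc q),
      -- (i) action of K on the generators
      (K (zGen q) = ((q : ℂ) ^ 2) • zGen q) ∧
      (K (wGen q) = (((q : ℂ) ^ 2)⁻¹) • wGen q) ∧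
      -- (ii) twisted Leibniz rules
      (∀ f g : PolDisc q, E (f * g) = E f * g + K f * E g) ∧
      (∀ f g : PolDisc q, F (f * g) = F f * K.symm g + f * F g) ∧
      -- (iii) action of E, F on the generators
      (E (zGen q) = (-(Real.sqrt q : ℂ)) • (zGen q * zGen q)) ∧
      (E (wGen q) = (((Real.sqrt q : ℂ) ^ 3)⁻¹) • (1 : PolDisc q)) ∧
      (F (zGen q) = (Real.sqrt q : ℂ) • (1 : PolDisc q)) ∧
      (F (wGen q) = (-((Real.sqrt q : ℂ) ^ 5)) • (wGen q * wGen q)) ∧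
      -- (iv) U_q(sl₂) relations among the operators
      (∀ f : PolDisc q, K (E (K.symm f)) = ((q : ℂ) ^ 2) • E f) ∧
      (∀ f : PolDisc q, K (F (K.symm f)) = (((q : ℂ) ^ 2)⁻¹) • F f) ∧
      (∀ f : PolDisc q, E (F f) - F (E f) =
        (((q : ℂ) - (q : ℂ)⁻¹)⁻¹) • (K f - K.symm f)) := by
  
  open QD QD2 QD3 QD4 QD5 in
  refine ⟨Keq q hq0, Emap q hq0, Fmap q hq0, KHom_z q hq0, KHom_w q hq0,
    E_leibniz q hq0, F_leibniz q hq0, E_z q hq0, E_w q hq0, F_z q hq0, F_w q hq0,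
    ?_, ?_, ?_⟩
  · intro f
    have h := KE q hq0 (KinvHom q hq0 f)
    rw [K_Kinv_apply] at h
    exact h
  · intro f
    have h := KF q hq0 (KinvHom q hq0 f)
    rw [K_Kinv_apply] at h
    exact h
  · intro f
    exact QD5.comm q hq0 hq1 f
end
end
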